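/- Let t, k, v, λ be positive integers with k ≥ t ≥ 2 and v ≥ 2 such that p = 1/v^t ≤ 1/4, and let a = sqrt(((1-p)^{2λ} - p^{2λ})/(1-2p)). Then the real number x = log(1-p) / (e · (C(k,t) · v^t · a · (1-p))^{1/λ}) satisfies -1/e < x < 0. -/
import Mathlib


/-- Let `t, k, v, lam` be positive integers with `k ≥ t ≥ 2`, `v ≥ 2`, `p = 1/v^t ≤ 1/4`,
and `a = sqrt(((1-p)^{2λ} - p^{2λ})/(1-2p))`.  Then
`x = log(1-p) / (e * (C(k,t) v^t a (1-p))^{1/λ})` satisfies `-1/e < x < 0`. -/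
theorem w_arg_is_small_enough (t k v lam : ℕ) (p a x : ℝ)
    (ht : 2 ≤ t) (hk : t ≤ k) (hv : 2 ≤ v) (hlam : 1 ≤ lam)
    (hp : p = 1 / (v : ℝ) ^ t) (hp4 : p ≤ 1 / 4)
    (ha : a = Real.sqrt (((1 - p) ^ (2 * lam) - p ^ (2 * lam)) / (1 - 2 * p)))
    (hx : x = Real.log (1 - p) /
      (Real.exp 1 * ((k.choose t : ℝ) * (v : ℝ) ^ t * a * (1 - p)) ^ ((1 : ℝ) / lam))) :
    -1 / Real.exp 1 < x ∧ x < 0 := by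
  have hv2 : (2:ℝ) ≤ (v:ℝ) := by exact_mod_cast hv
  have hvt : (4:ℝ) ≤ (v:ℝ) ^ t := by
    calc (4:ℝ) = 2 ^ 2 := by norm_num
    _ ≤ (v:ℝ) ^ 2 := pow_le_pow_left₀ (by norm_num) hv2 2
    _ ≤ (v:ℝ) ^ t := pow_le_pow_right₀ (by linarith) ht
  have hp0 : 0 < p := by rw [hp]; positivity
  have h34 : (3:ℝ)/4 ≤ 1 - p := by linarith
  have h1p0 : (0:ℝ) < 1 - p := by linarith
  have h1p1 : 1 - p < 1 := by linarith
  -- lower bound for a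
  have hple : p ≤ (1/3) * (1 - p) := by linarith
  have hpow : p ^ (2*lam) ≤ (1/9) * (1 - p) ^ (2*lam) := by
    calc p ^ (2*lam) ≤ ((1/3) * (1-p)) ^ (2*lam) := pow_le_pow_left₀ hp0.le hple _
    _ = (1/3:ℝ) ^ (2*lam) * (1-p) ^ (2*lam) := by rw [mul_pow]
    _ ≤ (1/9) * (1-p) ^ (2*lam) := by
        have h1 : (1/3:ℝ) ^ (2*lam) ≤ (1/3:ℝ) ^ 2 :=
          pow_le_pow_of_le_one (by norm_num) (by norm_num) (by omega)
        have h2 : (0:ℝ) ≤ (1-p) ^ (2*lam) := by positivity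
        nlinarith
  have hQ : (3/4:ℝ) ^ (2*lam) ≤ (1-p) ^ (2*lam) := pow_le_pow_left₀ (by norm_num) h34 _
  have hQ0 : (0:ℝ) < (3/4:ℝ) ^ lam := by positivity
  have hfrac : (8/9:ℝ) * (1-p) ^ (2*lam) ≤ ((1-p)^(2*lam) - p^(2*lam)) / (1 - 2*p) := by
    rw [le_div_iff₀ (by linarith : (0:ℝ) < 1 - 2*p)]
    have h2 : (0:ℝ) ≤ (1-p) ^ (2*lam) := by positivity
    nlinarith
  have ha' : (2/3) * (3/4:ℝ) ^ lam ≤ a := by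
    rw [ha]
    have hsq : ((2/3) * (3/4:ℝ) ^ lam) ^ 2 ≤ ((1-p)^(2*lam) - p^(2*lam)) / (1 - 2*p) := by
      have : ((2/3) * (3/4:ℝ) ^ lam) ^ 2 = (4/9) * (3/4:ℝ) ^ (2*lam) := by
        rw [mul_pow, ← pow_mul]; ring_nf
      nlinarith
    calc (2/3) * (3/4:ℝ) ^ lam
        = Real.sqrt (((2/3) * (3/4:ℝ) ^ lam) ^ 2) := (Real.sqrt_sq (by positivity)).symm
      _ ≤ _ := Real.sqrt_le_sqrt hsq
  -- lower bound for B
  have hC : (1:ℝ) ≤ (k.choose t : ℝ) := by exact_mod_cast (Nat.choose_pos hk)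
  have hB : (1/3:ℝ) ^ lam < (k.choose t : ℝ) * (v:ℝ) ^ t * a * (1 - p) := by
    have h1 : (1:ℝ) * 4 * ((2/3) * (3/4:ℝ) ^ lam) * (3/4) ≤
        (k.choose t : ℝ) * (v:ℝ) ^ t * a * (1 - p) := by
      have ha0 : (0:ℝ) ≤ (2/3) * (3/4:ℝ) ^ lam := by positivity
      have haa : (0:ℝ) ≤ a := le_trans (by positivity) ha'
      apply mul_le_mul _ h34 (by norm_num) (mul_nonneg (mul_nonneg (by positivity) (by positivity)) haa)
      apply mul_le_mul _ ha' ha0 (by positivity)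
      apply mul_le_mul hC hvt (by norm_num) (by linarith)
    have h2 : (1/3:ℝ) ^ lam ≤ (3/4:ℝ) ^ lam := pow_le_pow_left₀ (by norm_num) (by norm_num) lam
    nlinarith
  have hlam0 : (lam:ℝ) ≠ 0 := by positivity
  set B := (k.choose t : ℝ) * (v:ℝ) ^ t * a * (1 - p) with hBdef
  have hy : (1/3:ℝ) < B ^ ((1:ℝ)/lam) := by
    have h0 : (0:ℝ) ≤ (1/3:ℝ) ^ lam := by positivity
    have h := Real.rpow_lt_rpow h0 hB (by positivity : (0:ℝ) < (1:ℝ)/lam)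
    rwa [← Real.rpow_natCast (1/3:ℝ) lam, ← Real.rpow_mul (by norm_num),
      mul_one_div, div_self hlam0, Real.rpow_one] at h
  have hy0 : (0:ℝ) < B ^ ((1:ℝ)/lam) := lt_trans (by norm_num) hy
  -- log bounds
  have hlogneg : Real.log (1 - p) < 0 := Real.log_neg h1p0 h1p1
  have hloglb : -(1/3:ℝ) ≤ Real.log (1 - p) := by
    have h1 : Real.log (1-p)⁻¹ ≤ (1-p)⁻¹ - 1 := Real.log_le_sub_one_of_pos (by positivity)
    rw [Real.log_inv] at h1
    have h2 : (1-p)⁻¹ ≤ (3/4:ℝ)⁻¹ := by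
      apply inv_anti₀ (by norm_num) h34
    have h3 : ((3:ℝ)/4)⁻¹ = 4/3 := by norm_num
    linarith [h2, h3 ▸ h2]
  have he : (0:ℝ) < Real.exp 1 := Real.exp_pos 1
  set y := B ^ ((1:ℝ)/lam) with hydef
  clear_value y
  clear_value B
  clear hydef hp hp4 ha hple hpow hQ hfrac ha' hC hB hvt hv2
  constructor
  · rw [hx, div_lt_div_iff₀ he (mul_pos he hy0)]
    have hLy : 0 < Real.log (1-p) + y := by linarith
    nlinarith [mul_pos he hLy]
  · rw [hx]
    exact div_neg_of_neg_of_pos hlogneg (mul_pos he hy0)
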